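/- Suppose the nondegeneracy assumption holds and that ∫ ‖P_n^X(z,·) − π(·×F)‖_TV π(dz×F) → 0 as n→∞. Then the invariant measure has equivalent product structure: there exists a strictly positive measurable function h : E×F → (0,∞) such that π(dz,dw) = h(z,w) π(dz×F) π(E×dw). -/

import Mathlib

open MeasureTheory ProbabilityTheory Filter Set
open scoped ENNReal

noncomputable section

/-- The total variation distance between two (finite) measures. -/
def tvDist {α : Type*} [MeasurableSpace α] (μ ν : Measure α) : ℝ :=
  ⨆ A : { s : Set α // MeasurableSet s }, |(μ A.1).toReal - (ν A.1).toReal|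

/-- The product of two measures, written via `bind` so that no side conditions are needed. -/
def measProd {α β : Type*} [MeasurableSpace α] [MeasurableSpace β]
    (μ : Measure α) (ν : Measure β) : Measure (α × β) :=
  μ.bind fun a => ν.map (Prod.mk a)

/-- Iterates of a Markov transition kernel. -/
def kpow {α : Type*} [MeasurableSpace α] (κ : Kernel α α) : ℕ → Kernel α α
  | 0 => Kernel.id
  | n + 1 => (kpow κ n) ∘ₖ κ

/-- The canonical two-sided path space of the bivariate chain. -/
abbrev PathSp (E F : Type*) := (ℤ → E) × (ℤ → F)

section Setup

variable {E F : Type*} [MeasurableSpace E] [MeasurableSpace F]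

/-- The unobserved coordinate process. -/
def Xp (n : ℤ) (ω : PathSp E F) : E := ω.1 n

/-- The observed coordinate process. -/
def Yp (n : ℤ) (ω : PathSp E F) : F := ω.2 n

/-- The joint coordinate process. -/
def XYp (n : ℤ) (ω : PathSp E F) : E × F := (ω.1 n, ω.2 n)

/-- The canonical shift on path space. -/
def pathShift (ω : PathSp E F) : PathSp E F := (fun n => ω.1 (n + 1), fun n => ω.2 (n + 1))

/-- The shift on the observation path space. -/
def shiftObs (n : ℤ) (y : ℤ → F) : ℤ → F := fun k => y (k + n)

/-- `𝓕X I = σ{X_k : k ∈ I}`. -/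
def sigX (I : Set ℤ) : MeasurableSpace (PathSp E F) :=
  ⨆ k ∈ I, MeasurableSpace.comap (fun ω : PathSp E F => ω.1 k) inferInstance

/-- `𝓕Y I = σ{Y_k : k ∈ I}`. -/
def sigY (I : Set ℤ) : MeasurableSpace (PathSp E F) :=
  ⨆ k ∈ I, MeasurableSpace.comap (fun ω : PathSp E F => ω.2 k) inferInstance

/-- `σ{Y_k : k ≥ 0}` on the observation path space `F^ℤ`. -/
def sigObsPlus (F : Type*) [MeasurableSpace F] : MeasurableSpace (ℤ → F) :=
  ⨆ k ∈ Ici (0 : ℤ), MeasurableSpace.comap (fun y : ℤ → F => y k) inferInstance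

/-- Two-sided Markov property of a path-space law with one-step kernel `P`. -/
def TwoSidedMarkov (Plaw : Measure (PathSp E F)) (P : Kernel (E × F) (E × F)) : Prop :=
  ∀ (n : ℤ) (A : Set (E × F)), MeasurableSet A →
    ∀ S : Set (PathSp E F), MeasurableSet[sigX (Iic n) ⊔ sigY (Iic n)] S →
      Plaw (S ∩ XYp (n + 1) ⁻¹' A) = ∫⁻ ω in S, P (XYp n ω) A ∂Plaw

/-- Markov property of the forward chain `(X_n,Y_n)_{n ≥ m₀}`. -/
def FwdMarkovFrom (m₀ : ℤ) (μ : Measure (PathSp E F)) (P : Kernel (E × F) (E × F)) : Prop :=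
  ∀ n : ℤ, m₀ ≤ n → ∀ A : Set (E × F), MeasurableSet A →
    ∀ S : Set (PathSp E F), MeasurableSet[sigX (Icc m₀ n) ⊔ sigY (Icc m₀ n)] S →
      μ (S ∩ XYp (n + 1) ⁻¹' A) = ∫⁻ ω in S, P (XYp n ω) A ∂μ

/-- Markov property of the backward chain `(X_{-n},Y_{-n})_{n ≥ -m₀}` with kernel `P'`. -/
def BwdMarkovFrom (m₀ : ℤ) (μ : Measure (PathSp E F)) (P' : Kernel (E × F) (E × F)) : Prop :=
  ∀ n : ℤ, n ≤ m₀ → ∀ A : Set (E × F), MeasurableSet A →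
    ∀ S : Set (PathSp E F), MeasurableSet[sigX (Icc n m₀) ⊔ sigY (Icc n m₀)] S →
      μ (S ∩ XYp (n - 1) ⁻¹' A) = ∫⁻ ω in S, P' (XYp n ω) A ∂μ

/-- The canonical setup of the paper: `Plaw` is the law of the two-sided stationary Markov chain
`(X_n,Y_n)_{n∈ℤ}` with transition kernel `P` and stationary distribution `π`; `P'` is a version
of the reversed transition kernel; and `K (z,w) = Plaw^{z,w}` is the regular conditional
probability `Plaw( · | X_0 = z, Y_0 = w)`, under which the forward chain is Markov with kernel `P`
started at `(z,w)`, the backward chain is Markov with kernel `P'` started at `(z,w)`, and the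
forward and backward chains are independent. -/
structure CanonicalSetup (P P' : Kernel (E × F) (E × F)) (π : Measure (E × F))
    (Plaw : Measure (PathSp E F)) (K : Kernel (E × F) (PathSp E F)) : Prop where
  prob : IsProbabilityMeasure Plaw
  stationary : Plaw.map pathShift = Plaw
  marginal : Plaw.map (XYp 0) = π
  markov : TwoSidedMarkov Plaw P
  rev : ∀ A B : Set (E × F), MeasurableSet A → MeasurableSet B →
    ∫⁻ p in B, P' p A ∂π = ∫⁻ p in A, P p B ∂π
  disint : π.bind (fun p => K p) = Plaw
  start : ∀ p : E × F, K p {ω | XYp 0 ω = p} = 1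
  fwd : ∀ p : E × F, FwdMarkovFrom 0 (K p) P
  bwd : ∀ p : E × F, BwdMarkovFrom 0 (K p) P'
  indep : ∀ p : E × F,
    ProbabilityTheory.Indep (sigX (Ici 0) ⊔ sigY (Ici 0)) (sigX (Iic 0) ⊔ sigY (Iic 0)) (K p)

/-- Assumption (nondegeneracy): `P(z,w,dz',dw') = g(z,w,z',w') P₀(z,dz') Q(w,dw')` for a
strictly positive finite measurable density `g`. -/
structure Nondeg (P : Kernel (E × F) (E × F)) (P₀ : Kernel E E) (Q : Kernel F F)
    (g : E → F → E → F → ℝ≥0∞) : Prop where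
  markovP₀ : IsMarkovKernel P₀
  markovQ : IsMarkovKernel Q
  meas : Measurable fun q : (E × F) × E × F => g q.1.1 q.1.2 q.2.1 q.2.2
  pos : ∀ z w z' w', 0 < g z w z' w'
  fin : ∀ z w z' w', g z w z' w' < ⊤
  eq : ∀ p : E × F, P p = (measProd (P₀ p.1) (Q p.2)).withDensity fun q => g p.1 p.2 q.1 q.2

/-- Assumption (marginal ergodicity):
`∫ ‖Plaw^{z,w}(X_n ∈ ·) − Plaw(X_n ∈ ·)‖_TV π(dz,dw) → 0`. -/
def MarginalErgodic (π : Measure (E × F)) (Plaw : Measure (PathSp E F))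
    (K : Kernel (E × F) (PathSp E F)) : Prop :=
  Tendsto (fun n : ℕ =>
      ∫ p, tvDist ((K p).map (Xp (n : ℤ))) (Plaw.map (Xp (n : ℤ))) ∂π) atTop (nhds 0)

/-- Assumption (reversed marginal ergodicity):
`∫ ‖Plaw^{z,w}(X_{-n} ∈ ·) − Plaw(X_{-n} ∈ ·)‖_TV π(dz,dw) → 0`. -/
def RevMarginalErgodic (π : Measure (E × F)) (Plaw : Measure (PathSp E F))
    (K : Kernel (E × F) (PathSp E F)) : Prop :=
  Tendsto (fun n : ℕ =>
      ∫ p, tvDist ((K p).map (Xp (-(n : ℤ)))) (Plaw.map (Xp (-(n : ℤ)))) ∂π) atTop (nhds 0)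

/-- `m₁ = m₂` modulo `Plaw`-null sets (one inclusion: every `m₁`-set differs from an `m₂`-set by a
`Plaw`-null set). -/
def EqModNull (Plaw : Measure (PathSp E F)) (m₁ m₂ : MeasurableSpace (PathSp E F)) : Prop :=
  ∀ A : Set (PathSp E F), MeasurableSet[m₁] A →
    ∃ B : Set (PathSp E F), MeasurableSet[m₂] B ∧ Plaw ((A \ B) ∪ (B \ A)) = 0

end Setup

section More

variable {E F : Type*} [MeasurableSpace E] [MeasurableSpace F]

/-- `Pi` is a version of the nonlinear filter for the path-space law `mu`:
`Pi n` is a version of the regular conditional probability `mu(X_n ∈ · | Y_0,…,Y_n)`. -/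
def IsFilterOf (mu : Measure (PathSp E F)) (Pi : ℕ → PathSp E F → Measure E) : Prop :=
  ∀ n : ℕ,
    (∀ ω, IsProbabilityMeasure (Pi n ω)) ∧
    ∀ A : Set E, MeasurableSet A →
      Measurable[sigY (Icc 0 (n : ℤ))] (fun ω => Pi n ω A) ∧
      ∀ S : Set (PathSp E F), MeasurableSet[sigY (Icc 0 (n : ℤ))] S →
        ∫⁻ ω in S, Pi n ω A ∂mu = mu (S ∩ Xp (n : ℤ) ⁻¹' A)

/-- `κ` is a version of the regular conditional distribution of `X_n` given `Y_0`
under the path-space law `mu`. -/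
def IsCondLawX0 (mu : Measure (PathSp E F)) (n : ℕ) (κ : F → Measure E) : Prop :=
  (∀ w, IsProbabilityMeasure (κ w)) ∧
  ∀ A : Set E, MeasurableSet A →
    Measurable (fun w => κ w A) ∧
    ∀ B : Set F, MeasurableSet B →
      ∫⁻ w in B, κ w A ∂(mu.map (Yp 0)) = mu (Yp 0 ⁻¹' B ∩ Xp (n : ℤ) ⁻¹' A)

/-- `πX` is a version of the regular conditional probability `𝐏(Y_0 ∈ · | X_0)`,
equivalently a disintegration of `π` over its first marginal. -/
def IsCondYgivenX (π : Measure (E × F)) (πX : E → Measure F) : Prop :=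
  (∀ z, IsProbabilityMeasure (πX z)) ∧
  ∀ B : Set F, MeasurableSet B →
    Measurable (fun z => πX z B) ∧
    ∀ A : Set E, MeasurableSet A →
      ∫⁻ z in A, πX z B ∂(π.map Prod.fst) = π (A ×ˢ B)

/-- `πY` is a version of the regular conditional probability `𝐏(X_0 ∈ · | Y_0)`,
equivalently a disintegration of `π` over its second marginal. -/
def IsCondXgivenY (π : Measure (E × F)) (πY : F → Measure E) : Prop :=
  (∀ w, IsProbabilityMeasure (πY w)) ∧
  ∀ A : Set E, MeasurableSet A →
    Measurable (fun w => πY w A) ∧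
    ∀ B : Set F, MeasurableSet B →
      ∫⁻ w in B, πY w A ∂(π.map Prod.snd) = π (A ×ˢ B)

/-- `P_n^X(z,A) = ∫ P^n(z,w,A×F) π^X(z,dw)`, as a measure on `E`. -/
def PnX (P : Kernel (E × F) (E × F)) (πX : E → Measure F) (n : ℕ) (z : E) : Measure E :=
  ((πX z).bind fun w => (kpow P n) (z, w)).map Prod.fst

/-- `P_n^Y(w,B) = ∫ P^n(z,w,E×B) π^Y(w,dz)`, as a measure on `F`. -/
def PnY (P : Kernel (E × F) (E × F)) (πY : F → Measure E) (n : ℕ) (w : F) : Measure F :=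
  ((πY w).bind fun z => (kpow P n) (z, w)).map Prod.snd

/-- The one-step filter update
`U(ν,y₀,y₁)(A) = ∫ 1_A(z) g(z',y₀,z,y₁) P₀(z',dz) ν(dz') / (normalization)`. -/
def Ufilt (P₀ : Kernel E E) (g : E → F → E → F → ℝ≥0∞)
    (ν : Measure E) (y₀ y₁ : F) : Measure E :=
  let m : Measure E := ν.bind fun z' => (P₀ z').withDensity fun z => g z' y₀ z y₁
  (m Set.univ)⁻¹ • m

/-- The transition kernel `Γ` of the pair `(Π_n, Y_n)`:
`Γ(ν,y₀,A) = ∫∫ 1_A(U(ν,y₀,y₁),y₁) P(z,y₀,dz',dy₁) ν(dz)` (as a set function). -/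
def GammaFn (P : Kernel (E × F) (E × F)) (P₀ : Kernel E E) (g : E → F → E → F → ℝ≥0∞)
    (ν : Measure E) (y₀ : F) (A : Set (Measure E × F)) : ℝ≥0∞ :=
  ∫⁻ z, ∫⁻ q : E × F, A.indicator 1 (Ufilt P₀ g ν y₀ q.2, q.2) ∂(P (z, y₀)) ∂ν

/-- `m` is a `Γ`-invariant measure. -/
def GammaInvariant (P : Kernel (E × F) (E × F)) (P₀ : Kernel E E)
    (g : E → F → E → F → ℝ≥0∞) (m : Measure (Measure E × F)) : Prop :=
  ∀ A : Set (Measure E × F), MeasurableSet A →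
    ∫⁻ p, GammaFn P P₀ g p.1 p.2 A ∂m = m A

/-- `μ` is the barycenter of `m`: `μ(A×B) = ∫ ν(A) 1_B(w) m(dν,dw)`. -/
def HasBarycenter (m : Measure (Measure E × F)) (μ : Measure (E × F)) : Prop :=
  ∀ A : Set E, ∀ B : Set F, MeasurableSet A → MeasurableSet B →
    ∫⁻ p, p.1 A * B.indicator 1 p.2 ∂m = μ (A ×ˢ B)

/-- The transition kernel `Λ` of the triple `(Π_n, X_n, Y_n)`:
`Λ(ν,x₀,y₀,A) = ∫ 1_A(U(ν,y₀,y₁),x₁,y₁) P(x₀,y₀,dx₁,dy₁)` (as a set function). -/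
def LambdaFn (P : Kernel (E × F) (E × F)) (P₀ : Kernel E E) (g : E → F → E → F → ℝ≥0∞)
    (ν : Measure E) (x₀ : E) (y₀ : F) (A : Set (Measure E × E × F)) : ℝ≥0∞ :=
  ∫⁻ q : E × F, A.indicator 1 (Ufilt P₀ g ν y₀ q.2, q.1, q.2) ∂(P (x₀, y₀))

/-- `M` is a `Λ`-invariant measure. -/
def LambdaInvariant (P : Kernel (E × F) (E × F)) (P₀ : Kernel E E)
    (g : E → F → E → F → ℝ≥0∞) (M : Measure (Measure E × E × F)) : Prop :=
  ∀ A : Set (Measure E × E × F), MeasurableSet A →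
    ∫⁻ p, LambdaFn P P₀ g p.1 p.2.1 p.2.2 A ∂M = M A

/-- `M` has marginal `π` on `E × F`. -/
def HasMarginalPi (M : Measure (Measure E × E × F)) (π : Measure (E × F)) : Prop :=
  ∀ B : Set (E × F), MeasurableSet B →
    M ((fun p : Measure E × E × F => (p.2.1, p.2.2)) ⁻¹' B) = π B

/-- The class `𝔐` of measures `M` on `𝒫(E)×E×F` such that
`M(A×B×C) = ∫ ν(B) 1_{A×C}(ν,w) M(dν,dz,dw)`. -/
def InClassM (M : Measure (Measure E × E × F)) : Prop :=
  ∀ A : Set (Measure E), ∀ B : Set E, ∀ C : Set F,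
    MeasurableSet A → MeasurableSet B → MeasurableSet C →
      M (A ×ˢ B ×ˢ C) = ∫⁻ p, p.1 B * (A ×ˢ C).indicator 1 (p.1, p.2.2) ∂M

/-- `ϖ` is a version of the regular conditional probability `𝐏(X_0 ∈ · | F^Y)`. -/
def IsCondX0FullObs (Plaw : Measure (PathSp E F)) (ϖ : (ℤ → F) → Measure E) : Prop :=
  (∀ y, IsProbabilityMeasure (ϖ y)) ∧
  ∀ A : Set E, MeasurableSet A →
    Measurable (fun y => ϖ y A) ∧
    ∀ B : Set (ℤ → F), MeasurableSet B →
      ∫⁻ y in B, ϖ y A ∂(Plaw.map Prod.snd) = Plaw (Xp 0 ⁻¹' A ∩ Prod.snd ⁻¹' B)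

/-- `ϖ⁺` is a version of the regular conditional probability `𝐏(X_0 ∈ · | F^Y_+)`. -/
def IsCondX0FutureObs (Plaw : Measure (PathSp E F)) (ϖp : (ℤ → F) → Measure E) : Prop :=
  (∀ y, IsProbabilityMeasure (ϖp y)) ∧
  ∀ A : Set E, MeasurableSet A →
    Measurable[sigObsPlus F] (fun y => ϖp y A) ∧
    ∀ B : Set (ℤ → F), MeasurableSet[sigObsPlus F] B →
      ∫⁻ y in B, ϖp y A ∂(Plaw.map Prod.snd) = Plaw (Xp 0 ⁻¹' A ∩ Prod.snd ⁻¹' B)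

/-- `PX` is a version of the conditional transition kernel
`𝐏(X_{n+1} ∈ · | F^X_{≤ n} ∨ F^Y)(ω) = P^X(X_n(ω), Θ^n Y(ω), ·)` of the unobserved
process given the observations (a Markov chain in a random environment). -/
def IsCondKernelPX (Plaw : Measure (PathSp E F)) (PX : E → (ℤ → F) → Measure E) : Prop :=
  (∀ z y, IsProbabilityMeasure (PX z y)) ∧
  Measurable (fun q : E × (ℤ → F) => PX q.1 q.2) ∧
  ∀ (n : ℤ) (A : Set E), MeasurableSet A →
    ∀ S : Set (PathSp E F), MeasurableSet[sigX (Iic n) ⊔ sigY Set.univ] S →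
      ∫⁻ ω in S, PX (Xp n ω) (shiftObs n ω.2) A ∂Plaw = Plaw (S ∩ Xp (n + 1) ⁻¹' A)

/-- The time-`n` law of the conditional (random-environment) chain `𝐏_{z,y}(X_n ∈ ·)`
started at `z` in the environment `y`. -/
def condChainLaw (PX : E → (ℤ → F) → Measure E) : ℕ → E → (ℤ → F) → Measure E
  | 0, z, _ => Measure.dirac z
  | n + 1, z, y => (condChainLaw PX n z y).bind fun x => PX x (shiftObs (n : ℤ) y)

end More


/-! ### Auxiliary lemmas for the proof -/

section AuxBasic

variable {α : Type*} [MeasurableSpace α]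

lemma measProd_eq_prod {E F : Type*} [MeasurableSpace E] [MeasurableSpace F]
    (μ : Measure E) (ν : Measure F) [SFinite ν] : measProd μ ν = μ.prod ν := by
  have hmeas : Measurable fun a : E => ν.map (Prod.mk a) := by
    refine Measure.measurable_of_measurable_coe _ fun s hs => ?_
    simp_rw [Measure.map_apply measurable_prodMk_left hs]
    exact measurable_measure_prodMk_left hs
  ext s hs
  rw [measProd, Measure.bind_apply hs hmeas.aemeasurable, Measure.prod_apply hs]
  refine lintegral_congr fun a => ?_
  rw [Measure.map_apply measurable_prodMk_left hs]

lemma kpow_zero_apply (κ : Kernel α α) (a : α) : kpow κ 0 a = Measure.dirac a := by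
  rw [kpow, Kernel.id_apply]

lemma kpow_succ_apply (κ : Kernel α α) (n : ℕ) (a : α) :
    kpow κ (n + 1) a = (κ a).bind (kpow κ n) := by
  rw [kpow, Kernel.comp_apply]

lemma isMarkovKernel_kpow (κ : Kernel α α) [IsMarkovKernel κ] (n : ℕ) :
    IsMarkovKernel (kpow κ n) := by
  induction n with
  | zero => rw [kpow]; infer_instance
  | succ n ih =>
    rw [kpow]
    haveI := ih
    infer_instance

lemma measure_bind_kpow_succ (μ : Measure α) (κ : Kernel α α) (n : ℕ) :
    μ.bind ⇑(kpow κ (n + 1)) = (μ.bind ⇑κ).bind ⇑(kpow κ n) := by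
  rw [Measure.bind_bind κ.measurable.aemeasurable (kpow κ n).measurable.aemeasurable]
  refine congrArg _ (funext fun a => ?_)
  rw [kpow_succ_apply]

lemma measure_bind_kpow_invariant (μ : Measure α) (κ : Kernel α α)
    (hinv : μ.bind ⇑κ = μ) (n : ℕ) : μ.bind ⇑(kpow κ n) = μ := by
  induction n with
  | zero =>
    have : μ.bind ⇑(kpow κ 0) = μ.bind (fun a => Measure.dirac a) := by
      refine congrArg _ (funext fun a => ?_)
      rw [kpow_zero_apply]
    rw [this]; exact Measure.bind_dirac
  | succ n ih => rw [measure_bind_kpow_succ, hinv, ih]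

lemma lintegral_null_iff {μ : Measure α} {f : α → ℝ≥0∞} (hf : Measurable f) :
    ∫⁻ a, f a ∂μ = 0 ↔ μ {a | f a ≠ 0} = 0 := by
  rw [lintegral_eq_zero_iff hf, Filter.EventuallyEq, ae_iff]
  simp only [Pi.zero_apply, ne_eq]

lemma isProbabilityMeasure_bind {β : Type*} [MeasurableSpace β] {μ : Measure α}
    [IsProbabilityMeasure μ] (κ : Kernel α β) [IsMarkovKernel κ] :
    IsProbabilityMeasure (μ.bind ⇑κ) := by
  constructor
  rw [Measure.bind_apply MeasurableSet.univ κ.measurable.aemeasurable]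
  simp

lemma withDensity_null_iff {μ : Measure α} {f : α → ℝ≥0∞} (hf : Measurable f)
    (hpos : ∀ a, f a ≠ 0) {s : Set α} (hs : MeasurableSet s) :
    μ.withDensity f s = 0 ↔ μ s = 0 := by
  rw [withDensity_apply _ hs, lintegral_eq_zero_iff hf, Filter.EventuallyEq, ae_iff]
  simp only [Pi.zero_apply]
  have h : {a | ¬ f a = 0} = Set.univ := Set.eq_univ_of_forall fun a => hpos a
  rw [h, Measure.restrict_apply_univ]

end AuxBasic

section AuxNondeg

variable {E F : Type*} [MeasurableSpace E] [MeasurableSpace F]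
  {P : Kernel (E × F) (E × F)} {P₀ : Kernel E E} {Q : Kernel F F} {g : E → F → E → F → ℝ≥0∞}

lemma measurable_prodK_coe (κ₁ : Kernel E E) (κ₂ : Kernel F F) [IsMarkovKernel κ₁]
    [IsMarkovKernel κ₂] {C : Set (E × F)} (hC : MeasurableSet C) :
    Measurable fun q : E × F => ((κ₁ q.1).prod (κ₂ q.2)) C := by
  have h := Kernel.measurable_coe ((κ₁.comap Prod.fst measurable_fst)
    ×ₖ (κ₂.comap Prod.snd measurable_snd)) hC
  simpa [Kernel.prod_apply, Kernel.comap_apply] using h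

lemma P_eq_withDensity (hnd : Nondeg P P₀ Q g) (p : E × F) :
    P p = ((P₀ p.1).prod (Q p.2)).withDensity (fun q => g p.1 p.2 q.1 q.2) := by
  haveI := hnd.markovP₀; haveI := hnd.markovQ
  rw [hnd.eq, measProd_eq_prod]

lemma measurable_g_right (hnd : Nondeg P P₀ Q g) (p : E × F) :
    Measurable (fun q : E × F => g p.1 p.2 q.1 q.2) :=
  hnd.meas.comp (measurable_const.prodMk measurable_id)

lemma P_null_iff (hnd : Nondeg P P₀ Q g) (p : E × F) {C : Set (E × F)}
    (hC : MeasurableSet C) : P p C = 0 ↔ ((P₀ p.1).prod (Q p.2)) C = 0 := by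
  haveI := hnd.markovP₀; haveI := hnd.markovQ
  rw [P_eq_withDensity hnd,
    withDensity_null_iff (measurable_g_right hnd p) (fun q => (hnd.pos p.1 p.2 q.1 q.2).ne') hC]

lemma prod_bind_bind (μ : Measure E) (ν : Measure F) [IsProbabilityMeasure μ]
    [IsProbabilityMeasure ν] (κ₁ : Kernel E E) (κ₂ : Kernel F F) [IsMarkovKernel κ₁]
    [IsMarkovKernel κ₂] {C : Set (E × F)} (hC : MeasurableSet C) :
    (μ.bind ⇑κ₁).prod (ν.bind ⇑κ₂) C = ∫⁻ p, ((κ₁ p.1).prod (κ₂ p.2)) C ∂(μ.prod ν) := by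
  haveI := isProbabilityMeasure_bind (μ := μ) κ₁
  haveI := isProbabilityMeasure_bind (μ := ν) κ₂
  have hF : Measurable (fun q : E × F => κ₂ q.2 (Prod.mk q.1 ⁻¹' C)) := by
    have ht : MeasurableSet {q : (E × F) × F | (q.1.1, q.2) ∈ C} :=
      (measurable_fst.fst.prodMk measurable_snd) hC
    have h := Kernel.measurable_kernel_prodMk_left
      (κ := κ₂.comap Prod.snd (measurable_snd : Measurable (Prod.snd : E × F → F))) ht
    simpa [Kernel.comap_apply, Set.preimage] using h
  have hg : Measurable fun a : E => ∫⁻ b, κ₂ b (Prod.mk a ⁻¹' C) ∂ν := by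
    have : Measurable fun a : E => ∫⁻ b, (fun q : E × F => κ₂ q.2 (Prod.mk q.1 ⁻¹' C)) (a, b) ∂ν :=
      Measurable.lintegral_prod_right' (f := fun q : E × F => κ₂ q.2 (Prod.mk q.1 ⁻¹' C)) hF
    simpa using this
  rw [Measure.prod_apply hC]
  have h1 : ∀ a : E, (ν.bind ⇑κ₂) (Prod.mk a ⁻¹' C) = ∫⁻ b, κ₂ b (Prod.mk a ⁻¹' C) ∂ν :=
    fun a => Measure.bind_apply (measurable_prodMk_left hC) κ₂.measurable.aemeasurable
  simp_rw [h1]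
  rw [Measure.lintegral_bind κ₁.measurable.aemeasurable hg.aemeasurable,
    lintegral_prod _ (measurable_prodK_coe κ₁ κ₂ hC).aemeasurable]
  refine lintegral_congr fun z => ?_
  rw [lintegral_lintegral_swap hF.aemeasurable]
  refine lintegral_congr fun w => ?_
  rw [Measure.prod_apply hC]

lemma kpow_null_iff (hnd : Nondeg P P₀ Q g) [IsMarkovKernel P] (n : ℕ) (p : E × F)
    {C : Set (E × F)} (hC : MeasurableSet C) :
    kpow P n p C = 0 ↔ ((kpow P₀ n p.1).prod (kpow Q n p.2)) C = 0 := by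
  haveI := hnd.markovP₀; haveI := hnd.markovQ
  induction n generalizing p with
  | zero =>
    rw [kpow_zero_apply, kpow_zero_apply, kpow_zero_apply, Measure.dirac_prod_dirac]
  | succ n ih =>
    haveI := isMarkovKernel_kpow P₀ n; haveI := isMarkovKernel_kpow Q n
    haveI := isMarkovKernel_kpow P n
    haveI : IsProbabilityMeasure (P₀ p.1) := IsMarkovKernel.isProbabilityMeasure p.1
    haveI : IsProbabilityMeasure (Q p.2) := IsMarkovKernel.isProbabilityMeasure p.2
    rw [kpow_succ_apply, Measure.bind_apply hC (kpow P n).measurable.aemeasurable,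
      lintegral_null_iff (Kernel.measurable_coe _ hC)]
    have hSeq : {q : E × F | kpow P n q C ≠ 0}
        = {q : E × F | ((kpow P₀ n q.1).prod (kpow Q n q.2)) C ≠ 0} := by
      ext q; simp only [Set.mem_setOf_eq, ne_eq]
      exact not_congr (ih q)
    have hmeasset : MeasurableSet {q : E × F | ((kpow P₀ n q.1).prod (kpow Q n q.2)) C ≠ 0} :=
      (measurable_prodK_coe (kpow P₀ n) (kpow Q n) hC (measurableSet_singleton 0)).compl
    rw [hSeq, P_null_iff hnd p hmeasset, kpow_succ_apply, kpow_succ_apply,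
      prod_bind_bind _ _ _ _ hC, lintegral_null_iff (measurable_prodK_coe _ _ hC)]

lemma fst_preimage_prod {A : Set E} : (Prod.fst ⁻¹' A : Set (E × F)) = A ×ˢ Set.univ := by
  ext q; simp

lemma snd_preimage_prod {B : Set F} : (Prod.snd ⁻¹' B : Set (E × F)) = Set.univ ×ˢ B := by
  ext q; simp

lemma pi_apply_kpow (π : Measure (E × F)) (hπinv : π.bind ⇑P = π) (n : ℕ)
    {C : Set (E × F)} (hC : MeasurableSet C) : π C = ∫⁻ q, kpow P n q C ∂π := by
  conv_lhs => rw [← measure_bind_kpow_invariant π P hπinv n]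
  rw [Measure.bind_apply hC (kpow P n).measurable.aemeasurable]

lemma kpow_rect_fst (hnd : Nondeg P P₀ Q g) [IsMarkovKernel P] (n : ℕ) (q : E × F)
    {A : Set E} (hA : MeasurableSet A) :
    kpow P n q (A ×ˢ Set.univ) = 0 ↔ kpow P₀ n q.1 A = 0 := by
  haveI := hnd.markovP₀; haveI := hnd.markovQ
  haveI := isMarkovKernel_kpow P₀ n; haveI := isMarkovKernel_kpow Q n
  rw [kpow_null_iff hnd n q (hA.prod MeasurableSet.univ), Measure.prod_prod]
  simp [measure_univ]

lemma kpow_rect_snd (hnd : Nondeg P P₀ Q g) [IsMarkovKernel P] (n : ℕ) (q : E × F)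
    {B : Set F} (hB : MeasurableSet B) :
    kpow P n q (Set.univ ×ˢ B) = 0 ↔ kpow Q n q.2 B = 0 := by
  haveI := hnd.markovP₀; haveI := hnd.markovQ
  haveI := isMarkovKernel_kpow P₀ n; haveI := isMarkovKernel_kpow Q n
  rw [kpow_null_iff hnd n q (MeasurableSet.univ.prod hB), Measure.prod_prod]
  simp [measure_univ]

lemma marg_fst_null_iff (hnd : Nondeg P P₀ Q g) [IsMarkovKernel P] (π : Measure (E × F))
    (hπinv : π.bind ⇑P = π) (n : ℕ) {A : Set E} (hA : MeasurableSet A) :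
    π.map Prod.fst A = 0 ↔ ∫⁻ z, kpow P₀ n z A ∂(π.map Prod.fst) = 0 := by
  haveI := hnd.markovP₀; haveI := hnd.markovQ
  haveI := isMarkovKernel_kpow P₀ n
  rw [Measure.map_apply measurable_fst hA, fst_preimage_prod,
    pi_apply_kpow π hπinv n (hA.prod MeasurableSet.univ),
    lintegral_null_iff (Kernel.measurable_coe _ (hA.prod MeasurableSet.univ)),
    lintegral_map (Kernel.measurable_coe _ hA) measurable_fst,
    lintegral_null_iff (f := fun q : E × F => kpow P₀ n q.1 A)
      ((Kernel.measurable_coe _ hA).comp measurable_fst)]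
  have hSeq : {q : E × F | kpow P n q (A ×ˢ Set.univ) ≠ 0}
      = {q : E × F | kpow P₀ n q.1 A ≠ 0} := by
    ext q; simp only [Set.mem_setOf_eq, ne_eq]
    exact not_congr (kpow_rect_fst hnd n q hA)
  rw [hSeq]

lemma marg_snd_null_iff (hnd : Nondeg P P₀ Q g) [IsMarkovKernel P] (π : Measure (E × F))
    (hπinv : π.bind ⇑P = π) (n : ℕ) {B : Set F} (hB : MeasurableSet B) :
    π.map Prod.snd B = 0 ↔ ∫⁻ w, kpow Q n w B ∂(π.map Prod.snd) = 0 := by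
  haveI := hnd.markovP₀; haveI := hnd.markovQ
  haveI := isMarkovKernel_kpow Q n
  rw [Measure.map_apply measurable_snd hB, snd_preimage_prod,
    pi_apply_kpow π hπinv n (MeasurableSet.univ.prod hB),
    lintegral_null_iff (Kernel.measurable_coe _ (MeasurableSet.univ.prod hB)),
    lintegral_map (Kernel.measurable_coe _ hB) measurable_snd,
    lintegral_null_iff (f := fun q : E × F => kpow Q n q.2 B)
      ((Kernel.measurable_coe _ hB).comp measurable_snd)]
  have hSeq : {q : E × F | kpow P n q (Set.univ ×ˢ B) ≠ 0}
      = {q : E × F | kpow Q n q.2 B ≠ 0} := by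
    ext q; simp only [Set.mem_setOf_eq, ne_eq]
    exact not_congr (kpow_rect_snd hnd n q hB)
  rw [hSeq]

lemma PnX_apply [IsMarkovKernel P] (πX : E → Measure F) (n : ℕ) (z : E) {A : Set E}
    (hA : MeasurableSet A) :
    PnX P πX n z A = ∫⁻ w, kpow P n (z, w) (A ×ˢ Set.univ) ∂(πX z) := by
  have hker : Measurable fun w : F => kpow P n (z, w) :=
    (kpow P n).measurable.comp measurable_prodMk_left
  rw [PnX, Measure.map_apply measurable_fst hA,
    Measure.bind_apply (measurable_fst hA) hker.aemeasurable]
  simp_rw [fst_preimage_prod]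

lemma isProbabilityMeasure_PnX [IsMarkovKernel P] (πX : E → Measure F) (n : ℕ) (z : E)
    (hp : IsProbabilityMeasure (πX z)) : IsProbabilityMeasure (PnX P πX n z) := by
  haveI := isMarkovKernel_kpow P n
  haveI := hp
  constructor
  rw [PnX_apply πX n z MeasurableSet.univ, Set.univ_prod_univ]
  simp [measure_univ]

lemma PnX_null_iff (hnd : Nondeg P P₀ Q g) [IsMarkovKernel P] (πX : E → Measure F)
    (n : ℕ) (z : E) (hp : IsProbabilityMeasure (πX z)) {A : Set E} (hA : MeasurableSet A) :
    PnX P πX n z A = 0 ↔ kpow P₀ n z A = 0 := by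
  haveI := isMarkovKernel_kpow P n
  have hmeasw : Measurable fun w : F => kpow P n (z, w) (A ×ˢ Set.univ) :=
    (Kernel.measurable_coe _ (hA.prod MeasurableSet.univ)).comp measurable_prodMk_left
  rw [PnX_apply πX n z hA, lintegral_null_iff hmeasw]
  constructor
  · intro h0
    by_contra hA0
    have hall : {w : F | kpow P n (z, w) (A ×ˢ Set.univ) ≠ 0} = Set.univ := by
      refine Set.eq_univ_of_forall fun w => ?_
      simp only [Set.mem_setOf_eq, ne_eq]
      rw [kpow_rect_fst hnd n (z, w) hA]
      exact hA0
    rw [hall] at h0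
    haveI := hp
    rw [measure_univ] at h0
    exact one_ne_zero h0
  · intro h0
    have hempty : {w : F | kpow P n (z, w) (A ×ˢ Set.univ) ≠ 0} = ∅ := by
      refine Set.eq_empty_iff_forall_notMem.mpr fun w hw => ?_
      simp only [Set.mem_setOf_eq, ne_eq] at hw
      exact hw ((kpow_rect_fst hnd n (z, w) hA).mpr h0)
    rw [hempty]
    simp

end AuxNondeg

section AuxTV

open scoped symmDiff

variable {α : Type*} [MeasurableSpace α]

lemma tvDist_nonneg (μ ν : Measure α) : 0 ≤ tvDist μ ν :=
  Real.iSup_nonneg fun A => abs_nonneg _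

lemma tvDist_bddAbove (μ ν : Measure α) [IsFiniteMeasure μ] [IsFiniteMeasure ν] :
    BddAbove (Set.range fun A : { s : Set α // MeasurableSet s } =>
      |(μ A.1).toReal - (ν A.1).toReal|) := by
  refine ⟨(μ Set.univ).toReal + (ν Set.univ).toReal, ?_⟩
  rintro x ⟨A, rfl⟩
  refine (abs_sub _ _).trans ?_
  gcongr
  · rw [abs_of_nonneg ENNReal.toReal_nonneg]
    exact ENNReal.toReal_mono (measure_ne_top _ _) (measure_mono (Set.subset_univ _))
  · rw [abs_of_nonneg ENNReal.toReal_nonneg]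
    exact ENNReal.toReal_mono (measure_ne_top _ _) (measure_mono (Set.subset_univ _))

lemma abs_le_tvDist (μ ν : Measure α) [IsFiniteMeasure μ] [IsFiniteMeasure ν]
    {A : Set α} (hA : MeasurableSet A) :
    |(μ A).toReal - (ν A).toReal| ≤ tvDist μ ν :=
  le_ciSup (tvDist_bddAbove μ ν) (⟨A, hA⟩ : { s : Set α // MeasurableSet s })

lemma exists_tv_seq (α : Type*) [m0 : MeasurableSpace α] [MeasurableSpace.CountablyGenerated α] :
    ∃ A : ℕ → Set α, (∀ k, MeasurableSet (A k)) ∧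
      ∀ (μ ν : Measure α), IsFiniteMeasure μ → IsFiniteMeasure ν →
        tvDist μ ν = ⨆ k, |(μ (A k)).toReal - (ν (A k)).toReal| := by
  set 𝒜 := MeasureTheory.generateSetAlgebra (MeasurableSpace.countableGeneratingSet α) with h𝒜
  have halg : IsSetAlgebra 𝒜 := isSetAlgebra_generateSetAlgebra
  have hgen : m0 = MeasurableSpace.generateFrom 𝒜 := by
    rw [h𝒜, generateFrom_generateSetAlgebra_eq,
      MeasurableSpace.generateFrom_countableGeneratingSet]
  have hcnt : 𝒜.Countable :=
    countable_generateSetAlgebra MeasurableSpace.countable_countableGeneratingSet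
  have hne : (∅ : Set α) ∈ 𝒜 := halg.empty_mem
  refine ⟨Set.enumerateCountable hcnt ∅, fun k => ?_, ?_⟩
  · have hmem : Set.enumerateCountable hcnt ∅ k ∈ 𝒜 := Set.enumerateCountable_mem hcnt hne k
    exact hgen ▸ MeasurableSpace.measurableSet_generateFrom hmem
  intro μ ν hμ hν
  haveI := hμ; haveI := hν
  set A := Set.enumerateCountable hcnt ∅ with hA
  have hAmeas : ∀ k, MeasurableSet (A k) := fun k =>
    hgen ▸ MeasurableSpace.measurableSet_generateFrom (Set.enumerateCountable_mem hcnt hne k)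
  have hbdd2 : BddAbove (Set.range fun k => |(μ (A k)).toReal - (ν (A k)).toReal|) := by
    obtain ⟨c, hc⟩ := tvDist_bddAbove μ ν
    refine ⟨c, ?_⟩
    rintro x ⟨k, rfl⟩
    exact hc ⟨(⟨A k, hAmeas k⟩ : { s : Set α // MeasurableSet s }), rfl⟩
  refine le_antisymm ?_ ?_
  · haveI : Nonempty { s : Set α // MeasurableSet s } := ⟨⟨∅, MeasurableSet.empty⟩⟩
    refine ciSup_le fun S => ?_
    obtain ⟨s, hs⟩ := S
    refine le_of_forall_pos_le_add fun ε hε => ?_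
    have hmd := Measure.MeasureDense.of_generateFrom_isSetAlgebra_finite (μ := μ + ν) halg hgen
    obtain ⟨t, ht𝒜, hlt⟩ := hmd.approx s hs (measure_ne_top _ s) ε hε
    have htm : MeasurableSet t := hgen ▸ MeasurableSpace.measurableSet_generateFrom ht𝒜
    obtain ⟨k, hk⟩ : ∃ k, A k = t := by
      have : t ∈ Set.range A := by
        rw [hA, Set.range_enumerateCountable_of_mem hcnt hne]; exact ht𝒜
      exact this.imp fun k hk => hk
    have hsymm : ((μ + ν) (s ∆ t)).toReal ≤ ε :=
      ENNReal.toReal_le_of_le_ofReal hε.le hlt.le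
    have hadd : ((μ + ν) (s ∆ t)).toReal = (μ (s ∆ t)).toReal + (ν (s ∆ t)).toReal := by
      rw [Measure.add_apply, ENNReal.toReal_add (measure_ne_top _ _) (measure_ne_top _ _)]
    have h1 : |(μ s).toReal - (μ t).toReal| ≤ (μ (s ∆ t)).toReal :=
      abs_measureReal_sub_le_measureReal_symmDiff' hs.nullMeasurableSet htm.nullMeasurableSet
        (measure_ne_top _ _) (measure_ne_top _ _)
    have h2 : |(ν s).toReal - (ν t).toReal| ≤ (ν (s ∆ t)).toReal :=
      abs_measureReal_sub_le_measureReal_symmDiff' hs.nullMeasurableSet htm.nullMeasurableSet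
        (measure_ne_top _ _) (measure_ne_top _ _)
    have key : |(μ s).toReal - (ν s).toReal|
        ≤ |(μ t).toReal - (ν t).toReal| + ((μ (s ∆ t)).toReal + (ν (s ∆ t)).toReal) := by
      have := abs_sub_abs_le_abs_sub ((μ s).toReal - (ν s).toReal) ((μ t).toReal - (ν t).toReal)
      have habs : |(μ s).toReal - (ν s).toReal - ((μ t).toReal - (ν t).toReal)|
          ≤ |(μ s).toReal - (μ t).toReal| + |(ν s).toReal - (ν t).toReal| := by
        have : (μ s).toReal - (ν s).toReal - ((μ t).toReal - (ν t).toReal)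
            = ((μ s).toReal - (μ t).toReal) - ((ν s).toReal - (ν t).toReal) := by ring
        rw [this]
        exact abs_sub _ _
      calc |(μ s).toReal - (ν s).toReal|
          ≤ |(μ t).toReal - (ν t).toReal|
            + |(μ s).toReal - (ν s).toReal - ((μ t).toReal - (ν t).toReal)| := by
            have := abs_add_le ((μ t).toReal - (ν t).toReal)
              ((μ s).toReal - (ν s).toReal - ((μ t).toReal - (ν t).toReal))
            simpa using this
        _ ≤ |(μ t).toReal - (ν t).toReal|
            + (|(μ s).toReal - (μ t).toReal| + |(ν s).toReal - (ν t).toReal|) := by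
            exact add_le_add_right habs _
        _ ≤ _ := by gcongr
    have hk' : |(μ t).toReal - (ν t).toReal| ≤ ⨆ k, |(μ (A k)).toReal - (ν (A k)).toReal| := by
      have := le_ciSup hbdd2 k
      rwa [hk] at this
    calc |(μ s).toReal - (ν s).toReal|
        ≤ |(μ t).toReal - (ν t).toReal| + ((μ (s ∆ t)).toReal + (ν (s ∆ t)).toReal) := key
      _ ≤ (⨆ k, |(μ (A k)).toReal - (ν (A k)).toReal|) + ε := by
          refine add_le_add hk' ?_
          rw [← hadd]; exact hsymm
  · exact ciSup_le fun k => abs_le_tvDist μ ν (hAmeas k)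

end AuxTV

section AuxMain

lemma kpow_one {α : Type*} [MeasurableSpace α] (κ : Kernel α α) (a : α) :
    kpow κ 1 a = κ a := by
  rw [kpow_succ_apply]
  have : (fun x => kpow κ 0 x) = fun x => Measure.dirac x := funext fun x => kpow_zero_apply κ x
  rw [show ⇑(kpow κ 0) = fun x => Measure.dirac x from this]
  exact Measure.bind_dirac

lemma ae_eq_one_of_lintegral_eq {α : Type*} [MeasurableSpace α] {μ : Measure α}
    {f : α → ℝ≥0∞} (hf : Measurable f) (hle : ∀ a, f a ≤ 1) {V : Set α}
    (hV : MeasurableSet V) (hsupp : ∀ a, a ∉ V → f a = 0) (hfin : μ V ≠ ⊤)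
    (heq : ∫⁻ a, f a ∂μ = μ V) : ∀ᵐ a ∂μ, a ∈ V → f a = 1 := by
  have hsplit : ∫⁻ a, f a ∂μ = ∫⁻ a in V, f a ∂μ := by
    rw [← lintegral_add_compl f hV]
    have h2 : ∫⁻ a in Vᶜ, f a ∂μ = 0 := by
      rw [lintegral_eq_zero_iff hf]
      exact (ae_restrict_iff' hV.compl).mpr (Filter.Eventually.of_forall fun a ha => hsupp a ha)
    rw [h2, add_zero]
  have hVint : ∫⁻ a in V, f a ∂μ = μ V := by rw [← hsplit, heq]
  have hfinV : ∫⁻ a in V, f a ∂μ ≠ ⊤ := by rw [hVint]; exact hfin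
  have hsub : ∫⁻ a in V, (1 - f a) ∂μ = 0 := by
    rw [lintegral_sub hf hfinV (Filter.Eventually.of_forall fun a => hle a),
      setLIntegral_one, hVint, tsub_self]
  rw [lintegral_eq_zero_iff (f := fun a => 1 - f a) (measurable_const.sub hf)] at hsub
  have := (ae_restrict_iff' hV).mp hsub
  filter_upwards [this] with a ha haV
  have h1 : (1 : ℝ≥0∞) - f a = 0 := ha haV
  exact le_antisymm (hle a) (tsub_eq_zero_iff_le.mp h1)

variable {E F : Type*} [MeasurableSpace E] [MeasurableSpace F]
  {P : Kernel (E × F) (E × F)} {P₀ : Kernel E E} {Q : Kernel F F} {g : E → F → E → F → ℝ≥0∞}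

lemma bind_P₀_null (hnd : Nondeg P P₀ Q g) [IsMarkovKernel P] (π : Measure (E × F))
    [IsProbabilityMeasure π] (hπinv : π.bind ⇑P = π) {Z : Set E} (hZ : MeasurableSet Z)
    (h0 : π.map Prod.fst Z = 0) : (π.map Prod.fst).bind ⇑P₀ Z = 0 := by
  haveI := hnd.markovP₀
  rw [Measure.bind_apply hZ P₀.measurable.aemeasurable]
  have := (marg_fst_null_iff hnd π hπinv 1 hZ).mp h0
  have heq : ∀ z, kpow P₀ 1 z Z = P₀ z Z := fun z => by rw [kpow_one]
  simp_rw [heq] at this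
  exact this

lemma bind_Q_null (hnd : Nondeg P P₀ Q g) [IsMarkovKernel P] (π : Measure (E × F))
    [IsProbabilityMeasure π] (hπinv : π.bind ⇑P = π) {Z : Set F} (hZ : MeasurableSet Z)
    (h0 : π.map Prod.snd Z = 0) : (π.map Prod.snd).bind ⇑Q Z = 0 := by
  haveI := hnd.markovQ
  rw [Measure.bind_apply hZ Q.measurable.aemeasurable]
  have := (marg_snd_null_iff hnd π hπinv 1 hZ).mp h0
  have heq : ∀ w, kpow Q 1 w Z = Q w Z := fun w => by rw [kpow_one]
  simp_rw [heq] at this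
  exact this

lemma bind_Q_kpow_null (hnd : Nondeg P P₀ Q g) [IsMarkovKernel P] (π : Measure (E × F))
    [IsProbabilityMeasure π] (hπinv : π.bind ⇑P = π) (n : ℕ) {Z : Set F}
    (hZ : MeasurableSet Z) (h0 : π.map Prod.snd Z = 0) :
    ∫⁻ w, kpow Q n w Z ∂(π.map Prod.snd) = 0 :=
  (marg_snd_null_iff hnd π hπinv n hZ).mp h0

lemma prodnull_step (hnd : Nondeg P P₀ Q g) [IsMarkovKernel P] (π : Measure (E × F))
    [IsProbabilityMeasure π] (hπinv : π.bind ⇑P = π) {V : Set (E × F)}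
    (hV : MeasurableSet V)
    (h0 : (π.map Prod.fst).prod (π.map Prod.snd) V = 0) :
    (π.map Prod.fst).prod (π.map Prod.snd) {q | P q V ≠ 0} = 0 := by
  haveI := hnd.markovP₀; haveI := hnd.markovQ
  haveI : IsProbabilityMeasure (π.map Prod.fst) :=
    Measure.isProbabilityMeasure_map measurable_fst.aemeasurable
  haveI : IsProbabilityMeasure (π.map Prod.snd) :=
    Measure.isProbabilityMeasure_map measurable_snd.aemeasurable
  set m := π.map Prod.fst
  set ν := π.map Prod.snd
  haveI := isProbabilityMeasure_bind (μ := m) P₀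
  haveI := isProbabilityMeasure_bind (μ := ν) Q
  have hSeq : {q : E × F | P q V ≠ 0} = {q : E × F | ((P₀ q.1).prod (Q q.2)) V ≠ 0} := by
    ext q; simp only [Set.mem_setOf_eq, ne_eq]
    exact not_congr (P_null_iff hnd q hV)
  rw [hSeq, ← lintegral_null_iff (measurable_prodK_coe P₀ Q hV), ← prod_bind_bind m ν P₀ Q hV]
  -- show the product of the one-step smoothed marginals vanishes on V
  have hsecmeas : Measurable fun z : E => ν (Prod.mk z ⁻¹' V) :=
    measurable_measure_prodMk_left hV
  have hZ0 : m {z | ν (Prod.mk z ⁻¹' V) ≠ 0} = 0 := by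
    rw [← lintegral_null_iff hsecmeas, ← Measure.prod_apply hV]
    exact h0
  have hZmeas : MeasurableSet {z : E | ν (Prod.mk z ⁻¹' V) ≠ 0} :=
    (hsecmeas (measurableSet_singleton 0)).compl
  have hbindZ : (m.bind ⇑P₀) {z | ν (Prod.mk z ⁻¹' V) ≠ 0} = 0 :=
    bind_P₀_null hnd π hπinv hZmeas hZ0
  rw [Measure.prod_apply hV]
  have hae : ∀ᵐ z ∂(m.bind ⇑P₀), (ν.bind ⇑Q) (Prod.mk z ⁻¹' V) = 0 := by
    rw [ae_iff]
    refine measure_mono_null ?_ hbindZ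
    intro z hz
    simp only [Set.mem_setOf_eq] at hz ⊢
    intro hν0
    exact hz (bind_Q_null hnd π hπinv (measurable_prodMk_left hV) hν0)
  calc ∫⁻ z, (ν.bind ⇑Q) (Prod.mk z ⁻¹' V) ∂(m.bind ⇑P₀)
      = ∫⁻ _, 0 ∂(m.bind ⇑P₀) := lintegral_congr_ae hae
    _ = 0 := lintegral_zero

lemma prodnull_kpow (hnd : Nondeg P P₀ Q g) [IsMarkovKernel P] (π : Measure (E × F))
    [IsProbabilityMeasure π] (hπinv : π.bind ⇑P = π) {S : Set (E × F)}
    (hS : MeasurableSet S)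
    (h0 : (π.map Prod.fst).prod (π.map Prod.snd) S = 0) (n : ℕ) :
    (π.map Prod.fst).prod (π.map Prod.snd) {q | kpow P n q S ≠ 0} = 0 := by
  induction n with
  | zero =>
    have hSeq : {q : E × F | kpow P 0 q S ≠ 0} = S := by
      ext q
      rw [Set.mem_setOf_eq, kpow_zero_apply, Measure.dirac_apply' q hS]
      by_cases hq : q ∈ S <;> simp [hq]
    rw [hSeq]; exact h0
  | succ n ih =>
    have hVmeas : MeasurableSet {q : E × F | kpow P n q S ≠ 0} :=
      ((Kernel.measurable_coe (kpow P n) hS) (measurableSet_singleton 0)).compl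
    have hstep := prodnull_step hnd π hπinv hVmeas ih
    have hSeq : {q : E × F | kpow P (n + 1) q S ≠ 0}
        = {q : E × F | P q {q' | kpow P n q' S ≠ 0} ≠ 0} := by
      ext q
      simp only [Set.mem_setOf_eq, ne_eq]
      rw [kpow_succ_apply, Measure.bind_apply hS (kpow P n).measurable.aemeasurable,
        lintegral_null_iff (Kernel.measurable_coe _ hS)]
    rw [hSeq]; exact hstep

lemma direction_one (hnd : Nondeg P P₀ Q g) [IsMarkovKernel P] (π : Measure (E × F))
    [IsProbabilityMeasure π] (hπinv : π.bind ⇑P = π)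
    (πX : E → Measure F) (hprob : ∀ z, IsProbabilityMeasure (πX z))
    (𝔱 : ℕ → E → ℝ)
    (h𝔱def : ∀ n z, 𝔱 n z = tvDist (PnX P πX n z) (π.map Prod.fst))
    (h𝔱meas : ∀ n, Measurable (𝔱 n))
    (h𝔱int : ∀ n, Integrable (𝔱 n) (π.map Prod.fst))
    (herg' : Tendsto (fun n => ∫ z, 𝔱 n z ∂(π.map Prod.fst)) atTop (nhds 0))
    {C : Set (E × F)} (hC : MeasurableSet C)
    (hprodC : (π.map Prod.fst).prod (π.map Prod.snd) C ≠ 0) : π C ≠ 0 := by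
  haveI := hnd.markovP₀; haveI := hnd.markovQ
  haveI : IsProbabilityMeasure (π.map Prod.fst) :=
    Measure.isProbabilityMeasure_map measurable_fst.aemeasurable
  haveI : IsProbabilityMeasure (π.map Prod.snd) :=
    Measure.isProbabilityMeasure_map measurable_snd.aemeasurable
  set m := π.map Prod.fst with hm
  set ν := π.map Prod.snd with hν
  have hsec : Measurable fun w : F => m ((fun z => (z, w)) ⁻¹' C) :=
    measurable_measure_prodMk_right hC
  have hν0 : ν {w | m ((fun z => (z, w)) ⁻¹' C) ≠ 0} ≠ 0 := by
    intro h
    apply hprodC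
    rw [Measure.prod_apply_symm hC, lintegral_null_iff hsec]
    exact h
  have hex : ∃ k : ℕ, ν {w | ((k : ℝ≥0∞) + 1)⁻¹ ≤ m ((fun z => (z, w)) ⁻¹' C)} ≠ 0 := by
    by_contra h
    push_neg at h
    apply hν0
    refine measure_mono_null ?_ (measure_iUnion_null h)
    intro w hw
    simp only [Set.mem_setOf_eq] at hw
    obtain ⟨j, hj⟩ := ENNReal.exists_inv_nat_lt hw
    refine Set.mem_iUnion.mpr ⟨j, ?_⟩
    simp only [Set.mem_setOf_eq]
    exact le_trans (ENNReal.inv_le_inv' (self_le_add_right _ _)) hj.le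
  obtain ⟨k, hk⟩ := hex
  set δ : ℝ≥0∞ := ((k : ℝ≥0∞) + 1)⁻¹ with hδdef
  set Bh := {w | δ ≤ m ((fun z => (z, w)) ⁻¹' C)} with hBhdef
  have hBhmeas : MeasurableSet Bh := hsec measurableSet_Ici
  have hδ0 : δ ≠ 0 := by
    simp only [hδdef, ne_eq, ENNReal.inv_eq_zero]
    exact ENNReal.add_ne_top.mpr ⟨ENNReal.natCast_ne_top k, ENNReal.one_ne_top⟩
  have hδtop : δ ≠ ⊤ := by
    simp [hδdef]
  have hδr : 0 < δ.toReal := ENNReal.toReal_pos hδ0 hδtop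
  have hδ₂r : 0 < (ν Bh).toReal := ENNReal.toReal_pos hk (measure_ne_top _ _)
  have hpos : 0 < δ.toReal * (ν Bh).toReal / 2 := by positivity
  obtain ⟨n, hn⟩ := (herg'.eventually_lt_const hpos).exists
  haveI := isMarkovKernel_kpow P n
  haveI := isMarkovKernel_kpow P₀ n
  haveI := isMarkovKernel_kpow Q n
  set G := {z | δ.toReal ≤ 𝔱 n z} with hGdef
  have hGmeas : MeasurableSet G := measurableSet_le measurable_const (h𝔱meas n)
  have h𝔱nonneg : 0 ≤ᵐ[m] 𝔱 n :=
    Filter.Eventually.of_forall fun z => by rw [h𝔱def]; exact tvDist_nonneg _ _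
  have hmarkov : δ.toReal * (m G).toReal ≤ ∫ z, 𝔱 n z ∂m :=
    mul_meas_ge_le_integral_of_nonneg h𝔱nonneg (h𝔱int n) δ.toReal
  have hmG : m G < ν Bh := by
    have h2 : δ.toReal * (m G).toReal < δ.toReal * (ν Bh).toReal := by
      refine lt_of_le_of_lt hmarkov (lt_of_lt_of_le hn ?_)
      nlinarith
    have h1 : (m G).toReal < (ν Bh).toReal := lt_of_mul_lt_mul_left h2 hδr.le
    exact (ENNReal.toReal_lt_toReal (measure_ne_top _ _) (measure_ne_top _ _)).mp h1
  set Bs := {w | kpow Q n w Bh ≠ 0} with hBsdef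
  have hBsmeas : MeasurableSet Bs :=
    ((Kernel.measurable_coe (kpow Q n) hBhmeas) (measurableSet_singleton 0)).compl
  have hBsπ : π (Set.univ ×ˢ Bs) = ν Bs := by
    rw [hν, Measure.map_apply measurable_snd hBsmeas, snd_preimage_prod]
  have hmono : ν Bh ≤ ν Bs := by
    have h1 : ν Bh = π (Set.univ ×ˢ Bh) := by
      rw [hν, Measure.map_apply measurable_snd hBhmeas, snd_preimage_prod]
    have h2 : π (Set.univ ×ˢ Bh) = ∫⁻ q, kpow P n q (Set.univ ×ˢ Bh) ∂π :=
      pi_apply_kpow π hπinv n (MeasurableSet.univ.prod hBhmeas)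
    have h3 : ∫⁻ q, kpow P n q (Set.univ ×ˢ Bh) ∂π
        ≤ π {q | kpow P n q (Set.univ ×ˢ Bh) ≠ 0} :=
      lintegral_le_meas (fun q => prob_le_one) (fun q hq => not_ne_iff.mp hq)
    have h4 : {q : E × F | kpow P n q (Set.univ ×ˢ Bh) ≠ 0} = Set.univ ×ˢ Bs := by
      ext q
      simp only [Set.mem_setOf_eq, ne_eq, Set.mem_prod, Set.mem_univ, true_and, hBsdef]
      exact not_congr (kpow_rect_snd hnd n q hBhmeas)
    calc ν Bh = π (Set.univ ×ˢ Bh) := h1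
      _ = ∫⁻ q, kpow P n q (Set.univ ×ˢ Bh) ∂π := h2
      _ ≤ π {q | kpow P n q (Set.univ ×ˢ Bh) ≠ 0} := h3
      _ = π (Set.univ ×ˢ Bs) := by rw [h4]
      _ = ν Bs := hBsπ
  have hcore : ∀ z, z ∉ G → ∀ w ∈ Bs, kpow P n (z, w) C ≠ 0 := by
    intro z hz w hw
    intro h0
    have hprod0 : ((kpow P₀ n z).prod (kpow Q n w)) C = 0 :=
      (kpow_null_iff hnd n (z, w) hC).mp h0
    have hsec' : Measurable fun b : F => kpow P₀ n z ((fun a => (a, b)) ⁻¹' C) :=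
      measurable_measure_prodMk_right hC
    rw [Measure.prod_apply_symm hC, lintegral_null_iff hsec'] at hprod0
    simp only [hBsdef, Set.mem_setOf_eq] at hw
    apply hw
    refine measure_mono_null ?_ hprod0
    intro b hb
    simp only [hBhdef, Set.mem_setOf_eq] at hb
    simp only [Set.mem_setOf_eq]
    have hCb : MeasurableSet ((fun a => (a, b)) ⁻¹' C) :=
      hC.preimage (measurable_id.prodMk measurable_const)
    haveI := isProbabilityMeasure_PnX (P := P) πX n z (hprob z)
    have htv : |(PnX P πX n z ((fun a => (a, b)) ⁻¹' C)).toReal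
        - (m ((fun a => (a, b)) ⁻¹' C)).toReal| ≤ 𝔱 n z := by
      rw [h𝔱def]
      exact abs_le_tvDist _ _ hCb
    have hmCb : δ.toReal ≤ (m ((fun a => (a, b)) ⁻¹' C)).toReal :=
      ENNReal.toReal_mono (measure_ne_top _ _) hb
    simp only [hGdef, Set.mem_setOf_eq, not_le] at hz
    have hPnX : PnX P πX n z ((fun a => (a, b)) ⁻¹' C) ≠ 0 := by
      intro h00
      rw [h00] at htv
      simp only [ENNReal.toReal_zero, zero_sub, abs_neg,
        abs_of_nonneg ENNReal.toReal_nonneg] at htv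
      linarith
    exact fun hk0 => hPnX ((PnX_null_iff hnd πX n z (hprob z) hCb).mpr hk0)
  intro hπC0
  have hae : π {q | kpow P n q C ≠ 0} = 0 := by
    rw [← lintegral_null_iff (Kernel.measurable_coe (kpow P n) hC),
      ← pi_apply_kpow π hπinv n hC]
    exact hπC0
  have hsub : (Gᶜ ×ˢ Bs : Set (E × F)) ⊆ {q | kpow P n q C ≠ 0} := by
    rintro ⟨z, w⟩ hq
    exact hcore z hq.1 w hq.2
  have h0 : π (Gᶜ ×ˢ Bs) = 0 := measure_mono_null hsub hae
  have hcover2 : (Set.univ ×ˢ Bs : Set (E × F)) ⊆ (Gᶜ ×ˢ Bs) ∪ (G ×ˢ Set.univ) := by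
    rintro ⟨z, w⟩ ⟨_, hw⟩
    by_cases hzG : z ∈ G
    · exact Or.inr ⟨hzG, trivial⟩
    · exact Or.inl ⟨hzG, hw⟩
  have hle : ν Bs ≤ π (Gᶜ ×ˢ Bs) + π (G ×ˢ Set.univ) := by
    rw [← hBsπ]
    exact le_trans (measure_mono hcover2) (measure_union_le _ _)
  rw [h0, zero_add] at hle
  have hGπ : π (G ×ˢ Set.univ) = m G := by
    rw [hm, Measure.map_apply measurable_fst hGmeas, fst_preimage_prod]
  rw [hGπ] at hle
  exact absurd (lt_of_lt_of_le hmG hmono) (not_lt.mpr hle)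

lemma direction_two (hnd : Nondeg P P₀ Q g) [IsMarkovKernel P] (π : Measure (E × F))
    [IsProbabilityMeasure π] (hπinv : π.bind ⇑P = π)
    (πX : E → Measure F) (hprob : ∀ z, IsProbabilityMeasure (πX z))
    (𝔱 : ℕ → E → ℝ)
    (h𝔱def : ∀ n z, 𝔱 n z = tvDist (PnX P πX n z) (π.map Prod.fst))
    (h𝔱meas : ∀ n, Measurable (𝔱 n))
    (h𝔱int : ∀ n, Integrable (𝔱 n) (π.map Prod.fst))
    (herg' : Tendsto (fun n => ∫ z, 𝔱 n z ∂(π.map Prod.fst)) atTop (nhds 0)) :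
    π.singularPart ((π.map Prod.fst).prod (π.map Prod.snd)) = 0 := by
  haveI := hnd.markovP₀; haveI := hnd.markovQ
  haveI : IsProbabilityMeasure (π.map Prod.fst) :=
    Measure.isProbabilityMeasure_map measurable_fst.aemeasurable
  haveI : IsProbabilityMeasure (π.map Prod.snd) :=
    Measure.isProbabilityMeasure_map measurable_snd.aemeasurable
  set m := π.map Prod.fst with hm
  set ν := π.map Prod.snd with hν
  set ρ := m.prod ν with hρ
  set σ₀ := π.singularPart ρ with hσ₀def
  refine Measure.measure_univ_eq_zero.mp ?_
  set s₀ := σ₀ Set.univ with hs₀def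
  obtain ⟨u, hu, h1, h2⟩ := Measure.mutuallySingular_singularPart π ρ
  set N := uᶜ with hNdef
  have hNmeas : MeasurableSet N := hu.compl
  have hσNc : σ₀ Nᶜ = 0 := by rw [hNdef, compl_compl]; exact h1
  have hρN : ρ N = 0 := h2
  have hπ_dec : π = σ₀ + ρ.withDensity (π.rnDeriv ρ) := π.haveLebesgueDecomposition_add ρ
  have hwd_null : ∀ S : Set (E × F), ρ S = 0 → (ρ.withDensity (π.rnDeriv ρ)) S = 0 :=
    fun S h => withDensity_absolutelyContinuous ρ _ h
  have hσ_le : ∀ S : Set (E × F), σ₀ S ≤ π S :=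
    fun S => Measure.le_iff'.mp (Measure.singularPart_le π ρ) S
  have hπN : π N = s₀ := by
    have hN1 : σ₀ N = s₀ := by
      have h3 := measure_add_measure_compl (μ := σ₀) hNmeas
      rw [hσNc, add_zero] at h3
      exact h3
    conv_lhs => rw [hπ_dec]
    rw [Measure.add_apply, hwd_null N hρN, add_zero, hN1]
  have key : ∀ n : ℕ, s₀.toReal ≤ ∫ z, 𝔱 n z ∂m := by
    intro n
    haveI := isMarkovKernel_kpow P n
    haveI := isMarkovKernel_kpow P₀ n
    haveI := isMarkovKernel_kpow Q n
    set V := {q : E × F | kpow P n q N ≠ 0} with hVdef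
    have hVmeas : MeasurableSet V :=
      ((Kernel.measurable_coe (kpow P n) hNmeas) (measurableSet_singleton 0)).compl
    have hρV : ρ V = 0 := prodnull_kpow hnd π hπinv hNmeas hρN n
    have hπV : π V = σ₀ V := by
      conv_lhs => rw [hπ_dec]
      rw [Measure.add_apply, hwd_null V hρV, add_zero]
    have hint : ∫⁻ q, kpow P n q N ∂π = π N := (pi_apply_kpow π hπinv n hNmeas).symm
    have hle1 : ∫⁻ q, kpow P n q N ∂π ≤ π V :=
      lintegral_le_meas (fun q => prob_le_one) (fun q hq => not_ne_iff.mp hq)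
    have hle2 : π V ≤ ∫⁻ q, kpow P n q N ∂π := by
      rw [hπV]
      calc σ₀ V ≤ s₀ := measure_mono (Set.subset_univ V)
        _ = π N := hπN.symm
        _ = _ := hint.symm
    have heq1 : ∫⁻ q, kpow P n q N ∂π = π V := le_antisymm hle1 hle2
    have hσVfull : σ₀ V = s₀ := by
      have hπVs : π V = s₀ := by rw [← heq1, hint, hπN]
      rw [← hπV]; exact hπVs
    have hσVc : σ₀ Vᶜ = 0 := by
      have h3 := measure_add_measure_compl (μ := σ₀) hVmeas
      rw [hσVfull] at h3
      have hfin : s₀ ≠ ⊤ := measure_ne_top σ₀ _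
      have h4 : s₀ + σ₀ Vᶜ = s₀ + 0 := by rw [add_zero]; exact h3
      exact WithTop.add_left_cancel hfin h4
    have hone : ∀ᵐ q ∂π, q ∈ V → kpow P n q N = 1 :=
      ae_eq_one_of_lintegral_eq (Kernel.measurable_coe _ hNmeas) (fun q => prob_le_one)
        hVmeas (fun q hq => not_ne_iff.mp hq) (measure_ne_top π V) heq1
    have hone_σ : ∀ᵐ q ∂σ₀, kpow P n q N = 1 := by
      rw [ae_iff]
      have hsub : {q | ¬ kpow P n q N = 1}
          ⊆ {q | ¬ (q ∈ V → kpow P n q N = 1)} ∪ Vᶜ := by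
        intro q hq
        by_cases hqV : q ∈ V
        · exact Or.inl fun himp => hq (himp hqV)
        · exact Or.inr hqV
      refine measure_mono_null hsub (measure_union_null ?_ hσVc)
      refine le_antisymm (le_trans (hσ_le _) ?_) zero_le
      rw [← ae_iff.mp hone]
    set 𝔅 := {p : E × F | kpow Q n p.2 {b | (p.1, b) ∈ N} ≠ 0} with h𝔅def
    have h𝔅meas_fun : Measurable fun p : E × F => kpow Q n p.2 {b | (p.1, b) ∈ N} := by
      have ht : MeasurableSet {q : (E × F) × F | (q.1.1, q.2) ∈ N} :=
        (measurable_fst.fst.prodMk measurable_snd) hNmeas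
      have h := Kernel.measurable_kernel_prodMk_left
        (κ := (kpow Q n).comap Prod.snd (measurable_snd : Measurable (Prod.snd : E × F → F))) ht
      simpa [Kernel.comap_apply] using h
    have h𝔅meas : MeasurableSet 𝔅 := (h𝔅meas_fun (measurableSet_singleton 0)).compl
    have hsecN : ∀ᵐ a ∂m, ν {b | (a, b) ∈ N} = 0 := by
      rw [ae_iff]
      have hP : ∫⁻ a, ν (Prod.mk a ⁻¹' N) ∂m = 0 := by
        rw [← Measure.prod_apply hNmeas]; exact hρN
      rw [lintegral_null_iff (measurable_measure_prodMk_left hNmeas)] at hP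
      exact hP
    have hρ𝔅 : ρ 𝔅 = 0 := by
      rw [hρ, Measure.prod_apply h𝔅meas]
      have hae0 : ∀ᵐ a ∂m, ν (Prod.mk a ⁻¹' 𝔅) = 0 := by
        filter_upwards [hsecN] with a ha
        have hNa : MeasurableSet {b | (a, b) ∈ N} := measurable_prodMk_left hNmeas
        have h0 : ∫⁻ w, kpow Q n w {b | (a, b) ∈ N} ∂ν = 0 :=
          bind_Q_kpow_null hnd π hπinv n hNa ha
        rw [lintegral_null_iff (Kernel.measurable_coe _ hNa)] at h0
        exact h0
      calc ∫⁻ a, ν (Prod.mk a ⁻¹' 𝔅) ∂m = ∫⁻ _, 0 ∂m := lintegral_congr_ae hae0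
        _ = 0 := lintegral_zero
    set W := {w | m {a | (a, w) ∈ 𝔅} ≠ 0} with hWdef
    have hWm_fun : Measurable fun w : F => m ((fun a => (a, w)) ⁻¹' 𝔅) :=
      measurable_measure_prodMk_right h𝔅meas
    have hWmeas : MeasurableSet W := (hWm_fun (measurableSet_singleton 0)).compl
    have hνW : ν W = 0 := by
      have hP : ∫⁻ w, m ((fun a => (a, w)) ⁻¹' 𝔅) ∂ν = 0 := by
        rw [← Measure.prod_apply_symm h𝔅meas]; exact hρ𝔅
      rw [lintegral_null_iff hWm_fun] at hP
      exact hP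
    have hWσ : σ₀ {p : E × F | p.2 ∈ W} = 0 := by
      have hπW : π {p : E × F | p.2 ∈ W} = 0 := by
        have heqW : {p : E × F | p.2 ∈ W} = Prod.snd ⁻¹' W := rfl
        rw [heqW, ← Measure.map_apply measurable_snd hWmeas]
        exact hνW
      exact le_antisymm (le_trans (hσ_le _) hπW.le) zero_le
    have hfinal : ∀ᵐ p : E × F ∂σ₀, 1 ≤ 𝔱 n p.1 := by
      have hWae : ∀ᵐ p : E × F ∂σ₀, p.2 ∉ W := by
        rw [ae_iff]
        simpa using hWσ
      filter_upwards [hone_σ, hWae] with p h1p h2p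
      obtain ⟨z, w⟩ := p
      simp only [hWdef, Set.mem_setOf_eq, not_not] at h2p
      have hcomp : kpow P n (z, w) Nᶜ = 0 := by
        rw [measure_compl hNmeas (measure_ne_top _ _), h1p, measure_univ, tsub_self]
      have hprodc : ((kpow P₀ n z).prod (kpow Q n w)) Nᶜ = 0 :=
        (kpow_null_iff hnd n (z, w) hNmeas.compl).mp hcomp
      have hprod1 : ((kpow P₀ n z).prod (kpow Q n w)) N = 1 := by
        have h3 := measure_add_measure_compl (μ := (kpow P₀ n z).prod (kpow Q n w)) hNmeas
        rw [hprodc, add_zero, measure_univ] at h3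
        exact h3
      have hint1 : ∫⁻ a, kpow Q n w (Prod.mk a ⁻¹' N) ∂(kpow P₀ n z) = kpow P₀ n z Set.univ := by
        rw [← Measure.prod_apply hNmeas, hprod1, measure_univ]
      have hae1 : ∀ᵐ a ∂(kpow P₀ n z), a ∈ Set.univ → kpow Q n w (Prod.mk a ⁻¹' N) = 1 :=
        ae_eq_one_of_lintegral_eq (measurable_measure_prodMk_left hNmeas)
          (fun a => prob_le_one) MeasurableSet.univ (fun a ha => absurd (Set.mem_univ a) ha)
          (measure_ne_top _ _) hint1
      have haeB : kpow P₀ n z {a | (a, w) ∈ 𝔅}ᶜ = 0 := by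
        have hnull : kpow P₀ n z {a | ¬ (a ∈ Set.univ → kpow Q n w (Prod.mk a ⁻¹' N) = 1)} = 0 :=
          ae_iff.mp hae1
        refine measure_mono_null (fun a ha => ?_) hnull
        simp only [h𝔅def, Set.mem_compl_iff, Set.mem_setOf_eq, not_not] at ha
        simp only [Set.mem_setOf_eq, Set.mem_univ, forall_true_left, true_implies]
        intro heq1'
        rw [show (Prod.mk a ⁻¹' N) = {b | (a, b) ∈ N} from rfl, ha] at heq1'
        exact zero_ne_one heq1'
      have h𝔅w_meas : MeasurableSet {a | (a, w) ∈ 𝔅} :=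
        h𝔅meas.preimage (measurable_id.prodMk measurable_const)
      have hP0 : kpow P₀ n z {a | (a, w) ∈ 𝔅} = 1 := by
        have h3 := measure_add_measure_compl (μ := kpow P₀ n z) h𝔅w_meas
        rw [haeB, add_zero, measure_univ] at h3
        exact h3
      haveI := isProbabilityMeasure_PnX (P := P) πX n z (hprob z)
      have hPnX1 : PnX P πX n z {a | (a, w) ∈ 𝔅} = 1 := by
        have hc : PnX P πX n z {a | (a, w) ∈ 𝔅}ᶜ = 0 := by
          refine (PnX_null_iff hnd πX n z (hprob z) h𝔅w_meas.compl).mpr ?_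
          exact haeB
        have h3 := measure_add_measure_compl (μ := PnX P πX n z) h𝔅w_meas
        rw [hc, add_zero, measure_univ] at h3
        exact h3
      have habs : |(PnX P πX n z {a | (a, w) ∈ 𝔅}).toReal
          - (m {a | (a, w) ∈ 𝔅}).toReal| ≤ 𝔱 n z := by
        rw [h𝔱def]
        exact abs_le_tvDist _ _ h𝔅w_meas
      rw [hPnX1] at habs
      rw [show {a | (a, w) ∈ 𝔅} = ((fun a => (a, w)) ⁻¹' 𝔅) from rfl] at habs
      rw [show m ((fun a => (a, w)) ⁻¹' 𝔅) = 0 from h2p] at habs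
      simpa using habs
    have hTmeas : MeasurableSet {z : E | 1 ≤ 𝔱 n z} :=
      measurableSet_le measurable_const (h𝔱meas n)
    have hmT : s₀ ≤ m {z | 1 ≤ 𝔱 n z} := by
      have hσT : σ₀ ({z : E | 1 ≤ 𝔱 n z} ×ˢ Set.univ) = s₀ := by
        have hcompl0 : σ₀ ({z : E | 1 ≤ 𝔱 n z} ×ˢ (Set.univ : Set F))ᶜ = 0 := by
          have heqc : ({z : E | 1 ≤ 𝔱 n z} ×ˢ (Set.univ : Set F))ᶜ
              = {p : E × F | ¬ 1 ≤ 𝔱 n p.1} := by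
            ext p; simp [Set.mem_prod]
          rw [heqc]
          exact ae_iff.mp hfinal
        have h3 := measure_add_measure_compl (μ := σ₀) (hTmeas.prod MeasurableSet.univ)
        rw [hcompl0, add_zero] at h3
        exact h3
      calc s₀ = σ₀ ({z : E | 1 ≤ 𝔱 n z} ×ˢ Set.univ) := hσT.symm
        _ ≤ π ({z : E | 1 ≤ 𝔱 n z} ×ˢ Set.univ) := hσ_le _
        _ = m {z | 1 ≤ 𝔱 n z} := by
            rw [hm, Measure.map_apply measurable_fst hTmeas, fst_preimage_prod]
    have h𝔱nonneg : 0 ≤ᵐ[m] 𝔱 n :=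
      Filter.Eventually.of_forall fun z => by rw [h𝔱def]; exact tvDist_nonneg _ _
    have hmarkov := mul_meas_ge_le_integral_of_nonneg h𝔱nonneg (h𝔱int n) 1
    calc s₀.toReal ≤ (m {z | 1 ≤ 𝔱 n z}).toReal :=
          ENNReal.toReal_mono (measure_ne_top _ _) hmT
      _ ≤ ∫ z, 𝔱 n z ∂m := by simpa [Measure.real] using hmarkov
  have hs0 : s₀.toReal ≤ 0 := ge_of_tendsto herg' (Filter.Eventually.of_forall key)
  have hs0' : s₀.toReal = 0 := le_antisymm hs0 ENNReal.toReal_nonneg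
  exact ((ENNReal.toReal_eq_zero_iff _).mp hs0').resolve_right (measure_ne_top σ₀ _)

end AuxMain

theorem invariant_measure_product_structure
    {E F : Type*}
    [MeasurableSpace E] [TopologicalSpace E] [PolishSpace E] [BorelSpace E]
    [MeasurableSpace F] [TopologicalSpace F] [PolishSpace F] [BorelSpace F]
    (P : Kernel (E × F) (E × F)) [IsMarkovKernel P]
    (π : Measure (E × F)) [IsProbabilityMeasure π]
    (hπinv : π.bind (fun p => P p) = π)
    (P₀ : Kernel E E) (Q : Kernel F F) (g : E → F → E → F → ℝ≥0∞)
    (hnd : Nondeg P P₀ Q g)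
    (πX : E → Measure F) (hπX : IsCondYgivenX π πX)
    (πY : F → Measure E) (hπY : IsCondXgivenY π πY)
    (herg : Tendsto (fun n : ℕ =>
        ∫ z, tvDist (PnX P πX n z) (π.map Prod.fst) ∂(π.map Prod.fst)) atTop (nhds 0)) :
    ∃ h : E × F → ℝ≥0∞, Measurable h ∧ (∀ p, 0 < h p ∧ h p < ⊤) ∧
      π = (measProd (π.map Prod.fst) (π.map Prod.snd)).withDensity h := by
  classical
  haveI := hnd.markovP₀; haveI := hnd.markovQ
  haveI : IsProbabilityMeasure (π.map Prod.fst) :=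
    Measure.isProbabilityMeasure_map measurable_fst.aemeasurable
  haveI : IsProbabilityMeasure (π.map Prod.snd) :=
    Measure.isProbabilityMeasure_map measurable_snd.aemeasurable
  set m := π.map Prod.fst with hm
  set ν := π.map Prod.snd with hν
  have hπinv' : π.bind ⇑P = π := hπinv
  let κX : Kernel E F := ⟨πX, Measure.measurable_of_measurable_coe _ fun B hB => (hπX.2 B hB).1⟩
  haveI : IsMarkovKernel κX := ⟨fun z => hπX.1 z⟩
  obtain ⟨A, hAmeas, hAtv⟩ := exists_tv_seq E
  set 𝔱 : ℕ → E → ℝ := fun n z => tvDist (PnX P πX n z) m with h𝔱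
  have h𝔱def : ∀ (n : ℕ) z, 𝔱 n z = tvDist (PnX P πX n z) m := fun n z => rfl
  have hprob : ∀ z, IsProbabilityMeasure (πX z) := hπX.1
  have hPnXprob : ∀ (n : ℕ) z, IsProbabilityMeasure (PnX P πX n z) :=
    fun n z => isProbabilityMeasure_PnX πX n z (hprob z)
  have h𝔱sup : ∀ (n : ℕ) z, 𝔱 n z = ⨆ k, |(PnX P πX n z (A k)).toReal - (m (A k)).toReal| := by
    intro n z
    haveI := hPnXprob n z
    exact hAtv (PnX P πX n z) m inferInstance inferInstance
  have hPnXmeas : ∀ (n : ℕ) {S : Set E}, MeasurableSet S →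
      Measurable fun z => PnX P πX n z S := by
    intro n S hS
    have heq : (fun z => PnX P πX n z S)
        = fun z => ∫⁻ w, kpow P n (z, w) (S ×ˢ Set.univ) ∂(κX z) :=
      funext fun z => PnX_apply πX n z hS
    rw [heq]
    exact Measurable.lintegral_kernel_prod_right' (κ := κX)
      (Kernel.measurable_coe (kpow P n) (hS.prod MeasurableSet.univ))
  have h𝔱meas : ∀ n, Measurable (𝔱 n) := by
    intro n
    have heq : 𝔱 n = fun z => ⨆ k, |(PnX P πX n z (A k)).toReal - (m (A k)).toReal| :=
      funext (h𝔱sup n)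
    rw [heq]
    exact Measurable.iSup fun k =>
      ((hPnXmeas n (hAmeas k)).ennreal_toReal.sub measurable_const).abs
  have h𝔱bdd : ∀ (n : ℕ) z, |𝔱 n z| ≤ 2 := by
    intro n z
    haveI := hPnXprob n z
    rw [abs_of_nonneg (by rw [h𝔱def]; exact tvDist_nonneg _ _), h𝔱def]
    refine Real.iSup_le (fun S => ?_) (by norm_num)
    have hb1 : ((PnX P πX n z) S.1).toReal ≤ 1 := by
      calc ((PnX P πX n z) S.1).toReal ≤ (1 : ℝ≥0∞).toReal :=
            ENNReal.toReal_mono ENNReal.one_ne_top prob_le_one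
        _ = 1 := ENNReal.toReal_one
    have hb2 : (m S.1).toReal ≤ 1 := by
      calc (m S.1).toReal ≤ (1 : ℝ≥0∞).toReal :=
            ENNReal.toReal_mono ENNReal.one_ne_top prob_le_one
        _ = 1 := ENNReal.toReal_one
    calc |((PnX P πX n z) S.1).toReal - (m S.1).toReal|
        ≤ |((PnX P πX n z) S.1).toReal| + |(m S.1).toReal| := abs_sub _ _
      _ ≤ 1 + 1 := by
          rw [abs_of_nonneg ENNReal.toReal_nonneg, abs_of_nonneg ENNReal.toReal_nonneg]
          exact add_le_add hb1 hb2
      _ = 2 := by norm_num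
  have h𝔱int : ∀ n, Integrable (𝔱 n) m := fun n =>
    ⟨(h𝔱meas n).aestronglyMeasurable,
      HasFiniteIntegral.of_bounded (C := 2)
        (Filter.Eventually.of_forall fun z => by
          simpa [Real.norm_eq_abs] using h𝔱bdd n z)⟩
  have herg' : Tendsto (fun n => ∫ z, 𝔱 n z ∂m) atTop (nhds 0) := herg
  have hsing := direction_two hnd π hπinv' πX hprob 𝔱 h𝔱def h𝔱meas h𝔱int herg'
  set ρ := m.prod ν with hρ
  have hdec : π = ρ.withDensity (π.rnDeriv ρ) := by
    conv_lhs => rw [π.haveLebesgueDecomposition_add ρ]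
    rw [hsing, zero_add]
  set h₀ := π.rnDeriv ρ with hh₀
  have h₀meas : Measurable h₀ := Measure.measurable_rnDeriv π ρ
  have h₀fin : ∀ᵐ q ∂ρ, h₀ q < ⊤ := Measure.rnDeriv_lt_top π ρ
  have hmeas0 : MeasurableSet {q : E × F | h₀ q = 0} := h₀meas (measurableSet_singleton 0)
  have hzeroset : ρ {q : E × F | h₀ q = 0} = 0 := by
    have hπ0 : π {q : E × F | h₀ q = 0} = 0 := by
      conv_lhs => rw [hdec]
      rw [withDensity_apply _ hmeas0]
      calc ∫⁻ q in {q : E × F | h₀ q = 0}, h₀ q ∂ρ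
          = ∫⁻ _ in {q : E × F | h₀ q = 0}, 0 ∂ρ :=
            setLIntegral_congr_fun hmeas0 (fun q hq => hq)
        _ = 0 := by simp
    by_contra hne
    exact direction_one hnd π hπinv' πX hprob 𝔱 h𝔱def h𝔱meas h𝔱int herg' hmeas0 hne hπ0
  have htopset : ρ {q : E × F | h₀ q = ⊤} = 0 := by
    have h5 := ae_iff.mp h₀fin
    have heqset : {q : E × F | h₀ q = ⊤} = {q : E × F | ¬ h₀ q < ⊤} := by
      ext q; simp [lt_top_iff_ne_top]
    rw [heqset]
    exact h5
  refine ⟨fun q => if h₀ q = 0 ∨ h₀ q = ⊤ then 1 else h₀ q, ?_, ?_, ?_⟩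
  · have hcond : MeasurableSet {q : E × F | h₀ q = 0 ∨ h₀ q = ⊤} := by
      rw [Set.setOf_or]
      exact hmeas0.union (h₀meas (measurableSet_singleton ⊤))
    exact Measurable.ite hcond measurable_const h₀meas
  · intro p
    dsimp only
    split_ifs with hp
    · exact ⟨zero_lt_one, ENNReal.one_lt_top⟩
    · push_neg at hp
      exact ⟨pos_iff_ne_zero.mpr hp.1, lt_top_iff_ne_top.mpr hp.2⟩
  · rw [measProd_eq_prod]
    conv_lhs => rw [hdec]
    refine withDensity_congr_ae ?_
    rw [Filter.EventuallyEq, ae_iff]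
    refine measure_mono_null (fun q hq => ?_) (measure_union_null hzeroset htopset)
    simp only [Set.mem_setOf_eq] at hq ⊢
    by_cases h0 : h₀ q = 0 ∨ h₀ q = ⊤
    · rcases h0 with h0 | h0
      · exact Set.mem_union_left _ h0
      · exact Set.mem_union_right _ h0
    · exact absurd (by rw [if_neg h0]) hq

end
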